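/- Let n ≥ 1, let p : 2^[n] → ℂ be a distribution (∑_I p_I = 1), and let J ⊆ [n]. Define p' : 2^[n] → ℂ by p'_I = p_{I Δ J}, where I Δ J = (I∖J) ∪ (J∖I) is the symmetric difference. Let k and k' denote the cumulants of p and p' respectively (computed from their moments μ_I = ∑_{L ⊇ I} p_L via k_I = ∑_{π ∈ Π(I)} (−1)^{|π|−1}(|π|−1)! ∏_{B ∈ π} μ_B). Then for every I with |I| ≥ 2: k'_I = −k_I if |J ∩ I| is odd and k'_I = k_I if |J ∩ I| is even; and for each i ∈ [n]: k'_{{i}} = 1 − k_{{i}} if i ∈ J and k'_{{i}} = k_{{i}} otherwise. -/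

import Mathlib

open Finset

/-- The cumulants of a table `μ` indexed by subsets of `[n]`. -/
noncomputable def cumulant {n : ℕ} (μ : Finset (Fin n) → ℂ) (I : Finset (Fin n)) : ℂ :=
  ∑ π : Finpartition I,
    (-1 : ℂ) ^ (π.parts.card - 1) * (Nat.factorial (π.parts.card - 1) : ℂ) *
      ∏ B ∈ π.parts, μ B

/-- The moments `μ_I = ∑_{L ⊇ I} p_L` of a table `p`. -/
noncomputable def moment {n : ℕ} (p : Finset (Fin n) → ℂ) (I : Finset (Fin n)) : ℂ :=
  ∑ L ∈ univ.filter (fun L => I ⊆ L), p L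


lemma moment_empty {n : ℕ} (p : Finset (Fin n) → ℂ) (hp : ∑ I : Finset (Fin n), p I = 1) :
    moment p ∅ = 1 := by
  simpa [moment] using hp

lemma parts_of_singleton {n : ℕ} (i : Fin n) (π : Finpartition ({i} : Finset (Fin n))) :
    π.parts = {{i}} := by
  have h1 : ∀ A ∈ π.parts, A = {i} := by
    intro A hA
    have h2 : A ⊆ {i} := π.le hA
    have h3 : A.Nonempty := π.nonempty_of_mem_parts hA
    exact subset_singleton_iff.1 h2 |>.resolve_left (by
      rintro rfl; exact absurd h3 (by simp))
  have h4 : {i} ∈ π.parts := by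
    have := (π.part_mem (a := i)).2 (by simp)
    rwa [h1 _ this] at this
  apply Finset.Subset.antisymm
  · intro A hA; simp [h1 A hA]
  · simpa using h4

lemma cumulant_singleton {n : ℕ} (μ : Finset (Fin n) → ℂ) (i : Fin n) :
    cumulant μ {i} = μ {i} := by
  haveI : Subsingleton (Finpartition ({i} : Finset (Fin n))) :=
    ⟨fun a b => Finpartition.ext (by rw [parts_of_singleton i a, parts_of_singleton i b])⟩
  rw [cumulant, Fintype.sum_subsingleton _ (Finpartition.indiscrete (Finset.singleton_ne_empty i))]
  simp [parts_of_singleton i]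

lemma sum_flip {n : ℕ} (p : Finset (Fin n) → ℂ) (j : Fin n) :
    ∑ I : Finset (Fin n), p (symmDiff I {j}) = ∑ I : Finset (Fin n), p I := by
  apply Fintype.sum_bijective (fun I => symmDiff I ({j} : Finset (Fin n)))
  · exact Function.Involutive.bijective (symmDiff_left_involutive ({j} : Finset (Fin n)))
  · intro I; rfl

lemma reindex_flip {n : ℕ} (j : Fin n) (Q : Finset (Fin n) → Prop) [DecidablePred Q]
    (f : Finset (Fin n) → ℂ) :
    ∑ L ∈ univ.filter Q, f (symmDiff L {j})
      = ∑ M ∈ univ.filter (fun M => Q (symmDiff M {j})), f M := by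
  apply Finset.sum_nbij' (fun L => symmDiff L ({j} : Finset (Fin n)))
    (fun M => symmDiff M ({j} : Finset (Fin n)))
  · intro a ha
    simp only [mem_filter, mem_univ, true_and] at ha ⊢
    simpa using ha
  · intro a ha
    simp only [mem_filter, mem_univ, true_and] at ha ⊢
    exact ha
  · intro a _; simp
  · intro a _; simp
  · intro a _; rfl

lemma moment_flip {n : ℕ} (p : Finset (Fin n) → ℂ) (j : Fin n) (B : Finset (Fin n)) :
    moment (fun K => p (symmDiff K {j})) B =
      if j ∈ B then moment p (B.erase j) - moment p B else moment p B := by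
  rw [moment, reindex_flip]
  by_cases hj : j ∈ B
  · rw [if_pos hj]
    have hchar : (univ.filter (fun M => B ⊆ symmDiff M ({j} : Finset (Fin n))))
        = univ.filter (fun M => B.erase j ⊆ M ∧ j ∉ M) := by
      ext M
      simp only [mem_filter, mem_univ, true_and]
      constructor
      · intro h
        constructor
        · intro x hx
          have hxB : x ∈ B := mem_of_mem_erase hx
          have := h hxB
          rw [Finset.mem_symmDiff] at this
          rcases this with ⟨h1, _⟩ | ⟨h1, _⟩
          · exact h1
          · exact absurd (Finset.mem_singleton.1 h1) (Finset.ne_of_mem_erase hx)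
        · intro hjM
          have := h hj
          rw [Finset.mem_symmDiff] at this
          rcases this with ⟨_, h2⟩ | ⟨_, h2⟩
          · exact h2 (Finset.mem_singleton_self j)
          · exact h2 hjM
      · rintro ⟨h1, h2⟩ x hx
        rw [Finset.mem_symmDiff]
        by_cases hxj : x = j
        · subst hxj; exact Or.inr ⟨Finset.mem_singleton_self x, h2⟩
        · exact Or.inl ⟨h1 (Finset.mem_erase.2 ⟨hxj, hx⟩), by simpa using hxj⟩
    rw [hchar]
    have hsplit := Finset.sum_filter_add_sum_filter_not
      (univ.filter (fun M => B.erase j ⊆ M)) (fun M => j ∈ M) p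
    rw [Finset.filter_filter, Finset.filter_filter] at hsplit
    have e1 : (univ.filter (fun M => B.erase j ⊆ M ∧ j ∈ M))
        = univ.filter (fun M => B ⊆ M) := by
      ext M
      simp only [mem_filter, mem_univ, true_and]
      rw [← Finset.insert_erase hj, Finset.insert_subset_iff]
      constructor
      · rintro ⟨h1, h2⟩
        refine ⟨h2, fun x hx => h1 ?_⟩
        exact Finset.mem_erase.2 ⟨Finset.ne_of_mem_erase hx, Finset.mem_insert.2 (Or.inr hx)⟩
      · rintro ⟨h1, h2⟩
        refine ⟨fun x hx => ?_, h1⟩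
        have hx' := Finset.mem_of_mem_erase hx
        rcases Finset.mem_insert.1 hx' with rfl | hxB
        · exact h1
        · exact h2 hxB
    have e2 : (univ.filter (fun M => (B.erase j ⊆ M) ∧ ¬ j ∈ M))
        = univ.filter (fun M => B.erase j ⊆ M ∧ j ∉ M) := rfl
    rw [e1] at hsplit
    rw [moment, moment, ← hsplit]
    ring
  · rw [if_neg hj]
    congr 1
    ext M
    simp only [mem_filter, mem_univ, true_and]
    constructor
    · intro h x hx
      have := h hx
      rw [Finset.mem_symmDiff] at this
      rcases this with ⟨h1, _⟩ | ⟨h1, _⟩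
      · exact h1
      · exact absurd (Finset.mem_singleton.1 h1) (fun e => hj (e ▸ hx))
    · intro h x hx
      rw [Finset.mem_symmDiff]
      exact Or.inl ⟨h hx, by simp; rintro rfl; exact hj hx⟩

variable {n : ℕ} {I : Finset (Fin n)} {j : Fin n}

/-- Restriction of a partition of `I` to `I.erase j`. -/
def restr (π : Finpartition I) : Finpartition (I.erase j) :=
  (π.avoid {j}).copy (Finset.erase_eq I j).symm

lemma parts_image_sdiff (π : Finpartition I) (hj : j ∈ I) :
    π.parts.image (· \ {j}) = insert ((π.part j).erase j) (π.parts.erase (π.part j)) := by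
  conv_lhs => rw [← Finset.insert_erase (π.part_mem.2 hj)]
  rw [Finset.image_insert]
  congr 1
  · exact (Finset.erase_eq _ _).symm
  · rw [Finset.image_congr (g := id), Finset.image_id]
    intro A hA
    simp only [mem_coe, Finset.mem_erase] at hA
    have hjA : j ∉ A := fun hjA =>
      hA.1 (π.eq_of_mem_parts hA.2 (π.part_mem.2 hj) hjA (π.mem_part hj))
    simp [Finset.sdiff_singleton_eq_erase, Finset.erase_eq_self.2 hjA]

lemma not_empty_mem_erase_part (π : Finpartition I) :
    (∅ : Finset (Fin n)) ∉ π.parts.erase (π.part j) :=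
  fun h => π.bot_notMem (Finset.mem_of_mem_erase h)

lemma restr_parts (π : Finpartition I) (hj : j ∈ I) :
    (restr π : Finpartition (I.erase j)).parts =
      if (π.part j).erase j = ∅ then π.parts.erase (π.part j)
      else insert ((π.part j).erase j) (π.parts.erase (π.part j)) := by
  have h : (restr π : Finpartition (I.erase j)).parts
      = (π.parts.image (· \ {j})).erase ∅ := rfl
  rw [h, parts_image_sdiff π hj]
  split_ifs with hc
  · rw [hc]
    rw [Finset.erase_insert (not_empty_mem_erase_part π)]
  · rw [Finset.erase_eq_self.2]
    simp only [Finset.mem_insert, not_or]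
    exact ⟨fun e => hc e.symm, fun h' => not_empty_mem_erase_part π h'⟩

/-- Add `j` as a new singleton block. -/
def extendJ (hj : j ∈ I) (σ : Finpartition (I.erase j)) : Finpartition I :=
  σ.extend (b := {j}) (by simp)
    (Finset.disjoint_singleton_right.2 (Finset.notMem_erase j I))
    (by
      ext x
      simp only [sup_eq_union, Finset.mem_union, Finset.mem_erase, Finset.mem_singleton]
      constructor
      · rintro (⟨_, h⟩ | rfl) <;> [exact h; exact hj]
      · intro hx
        by_cases hxj : x = j
        · exact Or.inr hxj
        · exact Or.inl ⟨hxj, hx⟩)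

lemma extendJ_parts (hj : j ∈ I) (σ : Finpartition (I.erase j)) :
    (extendJ hj σ).parts = insert {j} σ.parts := rfl

lemma not_mem_of_mem_restr_parts (σ : Finpartition (I.erase j)) {A : Finset (Fin n)}
    (hA : A ∈ σ.parts) : j ∉ A := fun h => Finset.notMem_erase j I (σ.le hA h)

/-- Insert `j` into the block `C` of a partition of `I.erase j`. -/
def insertPart (hj : j ∈ I) (σ : Finpartition (I.erase j)) (C : Finset (Fin n))
    (hC : C ∈ σ.parts) : Finpartition I where
  parts := insert (insert j C) (σ.parts.erase C)
  supIndep := by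
    rw [Finset.supIndep_iff_pairwiseDisjoint, Finset.coe_insert]
    refine Set.PairwiseDisjoint.insert ?_ ?_
    · exact (σ.supIndep.pairwiseDisjoint).subset (by
        intro x hx; exact Finset.mem_of_mem_erase (by exact_mod_cast hx))
    · intro D hD hne
      simp only [mem_coe, Finset.mem_erase] at hD
      have h1 : j ∉ D := not_mem_of_mem_restr_parts σ hD.2
      have h2 : Disjoint C D := σ.disjoint hC hD.2 (fun e => hD.1 e.symm)
      simpa [id, Finset.disjoint_insert_left, h1] using h2.symm.symm
  sup_parts := by
    have h2 : σ.parts = insert C (σ.parts.erase C) := (Finset.insert_erase hC).symm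
    have h1 : (insert C (σ.parts.erase C)).sup id = I.erase j := by rw [← h2]; exact σ.sup_parts
    rw [Finset.sup_insert] at h1 ⊢
    simp only [id, sup_eq_union] at h1 ⊢
    rw [Finset.insert_union, h1, Finset.insert_erase hj]
  bot_notMem := by
    simp only [bot_eq_empty, Finset.mem_insert, not_or]
    constructor
    · exact fun e => by simpa using congrArg (j ∈ ·) e.symm
    · exact fun h => σ.bot_notMem (Finset.mem_of_mem_erase h)

lemma insertPart_parts (hj : j ∈ I) (σ : Finpartition (I.erase j)) (C : Finset (Fin n))
    (hC : C ∈ σ.parts) :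
    (insertPart hj σ C hC).parts = insert (insert j C) (σ.parts.erase C) := rfl

lemma insertPart_part_j (hj : j ∈ I) (σ : Finpartition (I.erase j)) (C : Finset (Fin n))
    (hC : C ∈ σ.parts) : (insertPart hj σ C hC).part j = insert j C :=
  Finpartition.part_eq_of_mem _ (Finset.mem_insert_self _ _) (Finset.mem_insert_self j C)

lemma extendJ_part_j (hj : j ∈ I) (σ : Finpartition (I.erase j)) :
    (extendJ hj σ).part j = {j} :=
  Finpartition.part_eq_of_mem _ (Finset.mem_insert_self _ _) (Finset.mem_singleton_self j)

lemma singleton_not_mem_restr_parts (σ : Finpartition (I.erase j)) :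
    ({j} : Finset (Fin n)) ∉ σ.parts :=
  fun h => not_mem_of_mem_restr_parts σ h (Finset.mem_singleton_self j)

lemma restr_extendJ (hj : j ∈ I) (σ : Finpartition (I.erase j)) :
    restr (extendJ hj σ) = σ := by
  apply Finpartition.ext
  rw [restr_parts _ hj, extendJ_part_j hj σ, if_pos (by simp), extendJ_parts,
    Finset.erase_insert (singleton_not_mem_restr_parts σ)]

lemma insert_j_not_mem (σ : Finpartition (I.erase j)) (C : Finset (Fin n)) :
    insert j C ∉ σ.parts.erase C :=
  fun h => not_mem_of_mem_restr_parts σ (Finset.mem_of_mem_erase h) (Finset.mem_insert_self j C)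

lemma restr_insertPart (hj : j ∈ I) (σ : Finpartition (I.erase j)) (C : Finset (Fin n))
    (hC : C ∈ σ.parts) : restr (insertPart hj σ C hC) = σ := by
  have hjC : j ∉ C := not_mem_of_mem_restr_parts σ hC
  have hCne : C.Nonempty := σ.nonempty_of_mem_parts hC
  apply Finpartition.ext
  rw [restr_parts _ hj, insertPart_part_j hj σ C hC, Finset.erase_insert hjC,
    if_neg (by exact fun h => (h ▸ hCne).ne_empty rfl), insertPart_parts,
    Finset.erase_insert (insert_j_not_mem σ C), Finset.insert_erase hC]

lemma part_j_eq_singleton (π : Finpartition I) (hj : j ∈ I)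
    (h : (π.part j).erase j = ∅) : π.part j = {j} := by
  have h1 : π.part j = insert j ((π.part j).erase j) := (Finset.insert_erase (π.mem_part hj)).symm
  rw [h] at h1; simpa using h1

lemma eq_extendJ (π : Finpartition I) (hj : j ∈ I)
    (h : (π.part j).erase j = ∅) : π = extendJ hj (restr π) := by
  apply Finpartition.ext
  rw [extendJ_parts, restr_parts _ hj, if_pos h, part_j_eq_singleton π hj h,
    Finset.insert_erase (part_j_eq_singleton π hj h ▸ π.part_mem.2 hj)]

lemma erase_part_not_mem (π : Finpartition I) (hj : j ∈ I)
    (h : (π.part j).erase j ≠ ∅) : (π.part j).erase j ∉ π.parts.erase (π.part j) := by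
  intro hmem
  obtain ⟨x, hx⟩ := Finset.nonempty_of_ne_empty h
  have h1 : (π.part j).erase j = π.part j :=
    π.eq_of_mem_parts (Finset.mem_of_mem_erase hmem) (π.part_mem.2 hj)
      hx (Finset.mem_of_mem_erase hx)
  exact Finset.notMem_erase j _ (h1 ▸ π.mem_part hj)

lemma mem_restr_parts_of_ne (π : Finpartition I) (hj : j ∈ I)
    (h : (π.part j).erase j ≠ ∅) : (π.part j).erase j ∈ (restr π : Finpartition (I.erase j)).parts := by
  rw [restr_parts _ hj, if_neg h]; exact Finset.mem_insert_self _ _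

lemma eq_insertPart (π : Finpartition I) (hj : j ∈ I)
    (h : (π.part j).erase j ≠ ∅) :
    π = insertPart hj (restr π) ((π.part j).erase j) (mem_restr_parts_of_ne π hj h) := by
  apply Finpartition.ext
  rw [insertPart_parts, restr_parts _ hj, if_neg h,
    Finset.erase_insert (erase_part_not_mem π hj h),
    Finset.insert_erase (π.mem_part hj), Finset.insert_erase (π.part_mem.2 hj)]


lemma extendJ_ne_insertPart (hj : j ∈ I) (σ : Finpartition (I.erase j)) (C : Finset (Fin n))
    (hC : C ∈ σ.parts) : insertPart hj σ C hC ≠ extendJ hj σ := by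
  intro h
  have h1 : insert j C = ({j} : Finset (Fin n)) := by
    rw [← insertPart_part_j hj σ C hC, h, extendJ_part_j]
  obtain ⟨x, hx⟩ := σ.nonempty_of_mem_parts hC
  have hxj : x ≠ j := fun e => not_mem_of_mem_restr_parts σ hC (e ▸ hx)
  have : x ∈ ({j} : Finset (Fin n)) := h1 ▸ Finset.mem_insert_of_mem hx
  exact hxj (Finset.mem_singleton.1 this)

lemma fiber_eq (hj : j ∈ I) (σ : Finpartition (I.erase j)) [DecidableEq (Finpartition I)] :
    (univ.filter fun π : Finpartition I => restr π = σ)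
      = insert (extendJ hj σ) (σ.parts.attach.image fun C => insertPart hj σ C.1 C.2) := by
  ext π
  simp only [mem_filter, mem_univ, true_and, Finset.mem_insert, Finset.mem_image,
    Finset.mem_attach, true_and]
  constructor
  · intro h
    subst h
    by_cases hc : (π.part j).erase j = ∅
    · exact Or.inl (eq_extendJ π hj hc)
    · exact Or.inr ⟨⟨_, mem_restr_parts_of_ne π hj hc⟩, (eq_insertPart π hj hc).symm⟩
  · rintro (rfl | ⟨C, rfl⟩)
    · exact restr_extendJ hj σ
    · exact restr_insertPart hj σ C.1 C.2

lemma vanish (μ : Finset (Fin n) → ℂ) (hμ : μ ∅ = 1) (hj : j ∈ I)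
    (hne : (I.erase j).Nonempty) :
    ∑ π : Finpartition I,
      (-1 : ℂ) ^ (π.parts.card - 1) * (Nat.factorial (π.parts.card - 1) : ℂ) *
        (μ ((π.part j).erase j) * ∏ B ∈ π.parts.erase (π.part j), μ B) = 0 := by
  classical
  rw [← Finset.sum_fiberwise univ (fun π : Finpartition I => restr π)]
  apply Finset.sum_eq_zero
  intro σ _
  rw [fiber_eq hj σ, Finset.sum_insert, Finset.sum_image]
  · -- compute both pieces
    obtain ⟨k, hk⟩ : ∃ k, σ.parts.card = k + 1 := by
      have := Finset.card_pos.2 (σ.parts_nonempty (Finset.nonempty_iff_ne_empty.1 hne))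
      exact ⟨σ.parts.card - 1, (Nat.succ_pred_eq_of_pos this).symm⟩
    have hextparts : (extendJ hj σ).parts = insert {j} σ.parts := rfl
    have hextcard : (extendJ hj σ).parts.card = σ.parts.card + 1 := by
      rw [hextparts, Finset.card_insert_of_notMem (singleton_not_mem_restr_parts σ)]
    have hext : (-1 : ℂ) ^ ((extendJ hj σ).parts.card - 1)
          * (Nat.factorial ((extendJ hj σ).parts.card - 1) : ℂ)
          * (μ (((extendJ hj σ).part j).erase j)
            * ∏ B ∈ (extendJ hj σ).parts.erase ((extendJ hj σ).part j), μ B)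
        = (-1 : ℂ) ^ (k + 1) * (Nat.factorial (k + 1) : ℂ) * (1 * ∏ B ∈ σ.parts, μ B) := by
      rw [hextcard, hk, extendJ_part_j hj σ, hextparts,
        Finset.erase_insert (singleton_not_mem_restr_parts σ)]
      simp [hμ]
    have hins : ∀ (C : {x // x ∈ σ.parts}),
        (-1 : ℂ) ^ ((insertPart hj σ C.1 C.2).parts.card - 1)
          * (Nat.factorial ((insertPart hj σ C.1 C.2).parts.card - 1) : ℂ)
          * (μ (((insertPart hj σ C.1 C.2).part j).erase j)
            * ∏ B ∈ (insertPart hj σ C.1 C.2).parts.erase ((insertPart hj σ C.1 C.2).part j), μ B)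
        = (-1 : ℂ) ^ (σ.parts.card - 1) * (Nat.factorial (σ.parts.card - 1) : ℂ)
            * ∏ B ∈ σ.parts, μ B := by
      rintro ⟨C, hC⟩
      have hjC : j ∉ C := not_mem_of_mem_restr_parts σ hC
      have hcard : (insertPart hj σ C hC).parts.card = σ.parts.card := by
        rw [insertPart_parts, Finset.card_insert_of_notMem (insert_j_not_mem σ C),
          Finset.card_erase_of_mem hC, hk]
        omega
      rw [hcard, insertPart_part_j hj σ C hC, insertPart_parts,
        Finset.erase_insert (insert_j_not_mem σ C), Finset.erase_insert hjC,
        ← Finset.mul_prod_erase σ.parts μ hC]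
    rw [hext, Finset.sum_congr rfl (fun C _ => hins C), Finset.sum_const,
      Finset.card_attach, hk]
    simp only [Nat.add_sub_cancel, nsmul_eq_mul]
    push_cast [Nat.factorial_succ]
    ring
  · intro x _ y _ hxy
    have h1 : insert j x.1 = insert j y.1 := by
      rw [← insertPart_part_j hj σ x.1 x.2, ← insertPart_part_j hj σ y.1 y.2,
        show insertPart hj σ x.1 x.2 = insertPart hj σ y.1 y.2 from hxy]
    have hjx : j ∉ x.1 := not_mem_of_mem_restr_parts σ x.2
    have hjy : j ∉ y.1 := not_mem_of_mem_restr_parts σ y.2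
    apply Subtype.ext
    rw [← Finset.erase_insert hjx, ← Finset.erase_insert hjy, h1]
  · simp only [Finset.mem_image, Finset.mem_attach, true_and, not_exists]
    intro C h
    exact extendJ_ne_insertPart hj σ C.1 C.2 h

lemma cumulant_flip_not_mem (p : Finset (Fin n) → ℂ) (hj : j ∉ I) :
    cumulant (moment fun K => p (symmDiff K {j})) I = cumulant (moment p) I := by
  unfold cumulant
  apply Finset.sum_congr rfl
  intro π _
  congr 1
  apply Finset.prod_congr rfl
  intro B hB
  rw [moment_flip, if_neg (fun h => hj (π.le hB h))]

lemma cumulant_flip_mem (p : Finset (Fin n) → ℂ) (hp : ∑ K : Finset (Fin n), p K = 1)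
    (hj : j ∈ I) (hI : 2 ≤ I.card) :
    cumulant (moment fun K => p (symmDiff K {j})) I = - cumulant (moment p) I := by
  have hne : (I.erase j).Nonempty := by
    rw [← Finset.card_pos, Finset.card_erase_of_mem hj]
    omega
  unfold cumulant
  have key : ∀ π : Finpartition I,
      (-1 : ℂ) ^ (π.parts.card - 1) * (Nat.factorial (π.parts.card - 1) : ℂ)
          * ∏ B ∈ π.parts, moment (fun K => p (symmDiff K {j})) B
        = (-1 : ℂ) ^ (π.parts.card - 1) * (Nat.factorial (π.parts.card - 1) : ℂ)
            * (moment p ((π.part j).erase j) * ∏ B ∈ π.parts.erase (π.part j), moment p B)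
          - (-1 : ℂ) ^ (π.parts.card - 1) * (Nat.factorial (π.parts.card - 1) : ℂ)
            * ∏ B ∈ π.parts, moment p B := by
    intro π
    have hmem := π.part_mem.2 hj
    rw [← Finset.mul_prod_erase π.parts _ hmem, ← Finset.mul_prod_erase π.parts (moment p) hmem]
    have h1 : ∀ B ∈ π.parts.erase (π.part j),
        moment (fun K => p (symmDiff K {j})) B = moment p B := by
      intro B hB
      rw [moment_flip, if_neg]
      intro hjB
      exact (Finset.mem_erase.1 hB).1
        (π.eq_of_mem_parts (Finset.mem_of_mem_erase hB) hmem hjB (π.mem_part hj))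
    rw [Finset.prod_congr rfl h1, moment_flip, if_pos (π.mem_part hj)]
    ring
  rw [Finset.sum_congr rfl (fun π _ => key π), Finset.sum_sub_distrib,
    vanish (moment p) (moment_empty p hp) hj hne, zero_sub]

lemma cumulant_flip_self (p : Finset (Fin n) → ℂ) (hp : ∑ K : Finset (Fin n), p K = 1)
    (j : Fin n) :
    cumulant (moment fun K => p (symmDiff K {j})) {j} = 1 - cumulant (moment p) {j} := by
  rw [cumulant_singleton, cumulant_singleton, moment_flip,
    if_pos (Finset.mem_singleton_self j), Finset.erase_singleton, moment_empty p hp]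

lemma main_aux (J : Finset (Fin n)) :
    ∀ (p : Finset (Fin n) → ℂ), (∑ K : Finset (Fin n), p K = 1) →
    (∀ I : Finset (Fin n), 2 ≤ I.card →
        cumulant (moment fun K => p (symmDiff K J)) I
          = if Odd (J ∩ I).card then -cumulant (moment p) I else cumulant (moment p) I) ∧
    (∀ i : Fin n,
        cumulant (moment fun K => p (symmDiff K J)) {i}
          = if i ∈ J then 1 - cumulant (moment p) {i} else cumulant (moment p) {i}) := by
  induction J using Finset.induction with
  | empty =>
    intro p hp
    have hid : (fun K : Finset (Fin n) => p (symmDiff K ∅)) = p := by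
      funext K
      rw [show (∅ : Finset (Fin n)) = ⊥ from rfl, symmDiff_bot]
    constructor
    · intro I hI
      rw [hid, Finset.empty_inter]
      simp
    · intro i
      rw [hid]
      simp
  | @insert j J hjJ IH =>
    intro p hp
    have hq : ∑ K : Finset (Fin n), p (symmDiff K {j}) = 1 := by
      rw [sum_flip]; exact hp
    have hfun : (fun K => p (symmDiff K (insert j J)))
        = fun K => (fun M => p (symmDiff M {j})) (symmDiff K J) := by
      funext K
      simp only []
      congr 1
      rw [symmDiff_assoc]
      congr 1
      rw [symmDiff_comm, Disjoint.symmDiff_eq_sup (by simpa using hjJ), sup_eq_union,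
        Finset.insert_eq]
    obtain ⟨IH1, IH2⟩ := IH (fun M => p (symmDiff M {j})) hq
    constructor
    · intro I hI
      rw [hfun, IH1 I hI]
      by_cases hjI : j ∈ I
      · have hflip := cumulant_flip_mem (I := I) (j := j) p hp hjI hI
        have hcard : (insert j J ∩ I).card = (J ∩ I).card + 1 := by
          rw [Finset.insert_inter_of_mem hjI,
            Finset.card_insert_of_notMem (fun h => hjJ (Finset.mem_of_mem_inter_left h))]
        rw [hcard, hflip]
        by_cases ho : Odd (J ∩ I).card
        · rw [if_pos ho, if_neg (by simp only [Nat.odd_add_one, not_not]; exact ho), neg_neg]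
        · rw [if_neg ho, if_pos (Nat.odd_add_one.2 ho)]
      · have hflip := cumulant_flip_not_mem (I := I) (j := j) p hjI
        rw [Finset.insert_inter_of_notMem hjI, hflip]
    · intro i
      rw [hfun, IH2 i]
      by_cases hij : i = j
      · subst hij
        rw [if_neg hjJ, cumulant_flip_self p hp i, if_pos (Finset.mem_insert_self i J)]
      · have h1 := cumulant_flip_not_mem (I := ({i} : Finset (Fin n))) (j := j) p
          (by simp [Ne.symm hij])
        rw [h1]
        by_cases hiJ : i ∈ J
        · rw [if_pos hiJ, if_pos (Finset.mem_insert_of_mem hiJ)]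
        · rw [if_neg hiJ, if_neg (by simp [hij, hiJ])]

/-- the hypercube symmetry `ρ_J : p_I ↦ p_{I Δ J}` acts on cumulants by
`k_I ↦ (−1)^{|J∩I|} k_I` for `|I| ≥ 2` and `k_i ↦ 1 − k_i` for `i ∈ J`,
`k_i ↦ k_i` otherwise. -/
theorem cumulants_under_bit_swap {n : ℕ} (hn : 1 ≤ n)
    (p : Finset (Fin n) → ℂ) (hp : ∑ I : Finset (Fin n), p I = 1)
    (J : Finset (Fin n))
    (p' : Finset (Fin n) → ℂ) (hp' : ∀ I : Finset (Fin n), p' I = p (symmDiff I J)) :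
    (∀ I : Finset (Fin n), 2 ≤ I.card →
        cumulant (moment p') I =
          (if Odd (J ∩ I).card then -cumulant (moment p) I else cumulant (moment p) I)) ∧
    (∀ i : Fin n,
        cumulant (moment p') {i} =
          (if i ∈ J then 1 - cumulant (moment p) {i} else cumulant (moment p) {i})) := by
  have hfun : p' = fun K => p (symmDiff K J) := funext hp'
  obtain ⟨h1, h2⟩ := main_aux J p hp
  exact ⟨fun I hI => by rw [hfun]; exact h1 I hI, fun i => by rw [hfun]; exact h2 i⟩
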